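/- In the Lorentzian warped product X = I ×_f Y of a metric space Y with interval I and continuous f : I → (0,∞), the reverse triangle inequality holds: if (r,x) ≤ (s,y) ≤ (t,z) then τ((r,x),(t,z)) ≥ τ((r,x),(s,y)) + τ((s,y),(t,z)), where τ((s,x),(t,y)) := τ_{I×_f ℝ}((s,0),(t,d(x,y))). -/

import Mathlib

noncomputable section
open Real Set Filter

/-- A future-directed causal curve `s ↦ (α s, β s)` on `[a,b]` in the Lorentzian warped
product comparison space `I ×_f ℝ`, i.e. the spacetime `I × ℝ` with the continuous
metric `-dt² + f(t)² dx²` and time orientation `∂ₜ`. -/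
def IsCausalCurve (I : Set ℝ) (f : ℝ → ℝ) (a b : ℝ) (α β : ℝ → ℝ) : Prop :=
  a < b ∧ (∀ s ∈ Set.Icc a b, α s ∈ I) ∧
    (∀ s ∈ Set.Icc a b, DifferentiableAt ℝ α s ∧ DifferentiableAt ℝ β s) ∧
    (∀ s ∈ Set.Icc a b, 0 < deriv α s ∧ (f (α s)) ^ 2 * (deriv β s) ^ 2 ≤ (deriv α s) ^ 2)

/-- A future-directed timelike curve in `I ×_f ℝ`. -/
def IsTimelikeCurve (I : Set ℝ) (f : ℝ → ℝ) (a b : ℝ) (α β : ℝ → ℝ) : Prop :=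
  IsCausalCurve I f a b α β ∧
    ∀ s ∈ Set.Icc a b, (f (α s)) ^ 2 * (deriv β s) ^ 2 < (deriv α s) ^ 2

/-- The causal relation `≤` of `I ×_f ℝ`: there is a future-directed causal curve
from `p` to `q`, or `p = q`. -/
def causalRel (I : Set ℝ) (f : ℝ → ℝ) (p q : ℝ × ℝ) : Prop :=
  p = q ∨ ∃ a b α β, IsCausalCurve I f a b α β ∧
    α a = p.1 ∧ β a = p.2 ∧ α b = q.1 ∧ β b = q.2

/-- The chronological (timelike) relation `≪` of `I ×_f ℝ`. -/
def chronRel (I : Set ℝ) (f : ℝ → ℝ) (p q : ℝ × ℝ) : Prop :=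
  ∃ a b α β, IsTimelikeCurve I f a b α β ∧
    α a = p.1 ∧ β a = p.2 ∧ α b = q.1 ∧ β b = q.2

/-- The Lorentzian length `∫ √(α'² - f(α)² β'²)` of a causal curve in `I ×_f ℝ`. -/
def lorLength (f : ℝ → ℝ) (a b : ℝ) (α β : ℝ → ℝ) : ℝ :=
  ∫ s in a..b, Real.sqrt ((deriv α s) ^ 2 - (f (α s)) ^ 2 * (deriv β s) ^ 2)

/-- The time separation function of `I ×_f ℝ`: the supremum of Lorentzian lengths of
future-directed causal curves from `p` to `q` (and `0` if there are none). -/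
def timeSep (I : Set ℝ) (f : ℝ → ℝ) (p q : ℝ × ℝ) : ℝ :=
  sSup (insert 0 {L | ∃ a b α β, IsCausalCurve I f a b α β ∧
    α a = p.1 ∧ β a = p.2 ∧ α b = q.1 ∧ β b = q.2 ∧ L = lorLength f a b α β})

/-- The underlying interval `(-π/2, π/2)` of `AdS' = (-π/2,π/2) ×_cos ℝ`. -/
def adsStrip : Set ℝ := Set.Ioo (-(π / 2)) (π / 2)

/-- Causal relation of the Lorentzian warped product `I ×_f Y`:
`(s,x) ≤ (t,y)` iff `(s,0) ≤ (t, d(x,y))` in the comparison space `I ×_f ℝ`. -/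
def wpCausal (I : Set ℝ) (f : ℝ → ℝ) {Y : Type*} [MetricSpace Y] (p q : ℝ × Y) : Prop :=
  causalRel I f (p.1, 0) (q.1, dist p.2 q.2)

/-- Chronological relation of the Lorentzian warped product `I ×_f Y`. -/
def wpChron (I : Set ℝ) (f : ℝ → ℝ) {Y : Type*} [MetricSpace Y] (p q : ℝ × Y) : Prop :=
  chronRel I f (p.1, 0) (q.1, dist p.2 q.2)

/-- Time separation of the Lorentzian warped product `I ×_f Y`:
`τ((s,x),(t,y)) = τ_{I ×_f ℝ}((s,0),(t,d(x,y)))`. -/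
def wpTau (I : Set ℝ) (f : ℝ → ℝ) {Y : Type*} [MetricSpace Y] (p q : ℝ × Y) : ℝ :=
  timeSep I f (p.1, 0) (q.1, dist p.2 q.2)

/-- A future-directed causal curve in the Lorentzian warped product `I ×_f Y`. -/
def IsWpCausalCurve (I : Set ℝ) (f : ℝ → ℝ) {Y : Type*} [MetricSpace Y]
    (γ : ℝ → ℝ × Y) (a b : ℝ) : Prop :=
  a < b ∧ ContinuousOn γ (Set.Icc a b) ∧ (∀ s ∈ Set.Icc a b, (γ s).1 ∈ I) ∧
    ∀ u ∈ Set.Icc a b, ∀ v ∈ Set.Icc a b, u < v → wpCausal I f (γ u) (γ v) ∧ γ u ≠ γ v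

open MeasureTheory intervalIntegral Topology
set_option maxHeartbeats 1000000





-- interval integrability from a global bound
lemma bdd_meas_intervalIntegrable {g : ℝ → ℝ} {K : ℝ} (hg : Measurable g)
    (hK : ∀ u, |g u| ≤ K) (x y : ℝ) : IntervalIntegrable g volume x y := by
  rw [intervalIntegrable_iff]
  have hc : IntegrableOn (fun _ => K) (uIoc x y) volume :=
    integrableOn_const measure_Ioc_lt_top.ne
  exact Integrable.mono' hc hg.aestronglyMeasurable.restrict (ae_of_all _ (fun u => hK u))

-- clamp to [-c, c] is nonexpansive towards points of [-c, c]
lemma clamp_abs_le {c x : ℝ} (hc : 0 ≤ c) : |max (-c) (min c x)| ≤ c := by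
  rw [abs_le]
  constructor
  · exact le_max_left _ _
  · exact max_le (by linarith) (min_le_left _ _)

lemma clamp_close {c x y : ℝ} (hy : |y| ≤ c) :
    |max (-c) (min c x) - y| ≤ |x - y| := by
  have h1 := abs_le.1 hy
  rcases le_total x (-c) with h | h
  · rw [min_eq_right (by linarith [abs_nonneg y]), max_eq_left h]
    rw [abs_of_nonpos (by linarith), abs_of_nonpos (by linarith)]
    linarith
  · rcases le_total c x with h2 | h2
    · rw [min_eq_left h2, max_eq_right (by linarith [abs_nonneg y])]
      rw [abs_of_nonneg (by linarith), abs_of_nonneg (by linarith)]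
      linarith
    · rw [min_eq_right h2, max_eq_right h]

lemma aux_sqrt_mix {x θ : ℝ} (hx : x^2 ≤ 1) (h0 : 0 ≤ θ) (h1 : θ ≤ 1) :
    (1-θ) * Real.sqrt (1 - x^2) ≤ Real.sqrt (1 - ((1-θ)*x + θ)^2) := by
  have h1x : (0:ℝ) ≤ 1 - x^2 := by nlinarith
  have hxle : x ≤ 1 := by nlinarith
  rw [show (1-θ) * Real.sqrt (1 - x^2) = Real.sqrt ((1-θ)^2 * (1 - x^2)) by
    rw [Real.sqrt_mul (by positivity), Real.sqrt_sq (by linarith)]]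
  apply Real.sqrt_le_sqrt
  nlinarith [mul_nonneg (mul_nonneg h0 (by linarith : (0:ℝ) ≤ 1-θ)) (by linarith : (0:ℝ) ≤ 1-x)]

lemma aux_sqrt_diff {x y k : ℝ} (hx : x^2 ≤ 1) (hy : y^2 ≤ 1) (hk : 0 < k) :
    Real.sqrt (1 - x^2) ≤ Real.sqrt (1 - y^2) + (k/2 + |x - y|/k) := by
  have hC : 0 ≤ k/2 + |x-y|/k := by positivity
  rcases le_or_gt (Real.sqrt (1 - x^2)) (Real.sqrt (1 - y^2)) with h | h
  · linarith
  · set A := Real.sqrt (1 - x^2)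
    set B := Real.sqrt (1 - y^2)
    have hA : A^2 = 1 - x^2 := Real.sq_sqrt (by nlinarith)
    have hB : B^2 = 1 - y^2 := Real.sq_sqrt (by nlinarith)
    have hAn : 0 ≤ A := Real.sqrt_nonneg _
    have hBn : 0 ≤ B := Real.sqrt_nonneg _
    have hx1 : |x| ≤ 1 := abs_le.2 ⟨by nlinarith, by nlinarith⟩
    have hy1 : |y| ≤ 1 := abs_le.2 ⟨by nlinarith, by nlinarith⟩
    have habs : y^2 - x^2 ≤ |x - y| * (|x| + |y|) := by
      have h1 : y^2 - x^2 ≤ |(x-y)*(x+y)| := by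
        have := neg_le_abs ((x-y)*(x+y)); nlinarith
      have h2 : |(x-y)*(x+y)| = |x-y| * |x+y| := abs_mul _ _
      have h3 : |x+y| ≤ |x| + |y| := abs_add_le _ _
      nlinarith [abs_nonneg (x-y)]
    have key : (A - B)^2 ≤ 2 * |x - y| := by nlinarith [abs_nonneg (x-y)]
    have h2d : 2*|x-y| ≤ (k/2 + |x-y|/k)^2 := by
      have := sq_nonneg (k/2 - |x-y|/k)
      have hkk : k/2 * (|x-y|/k) = |x-y|/2 := by field_simp
      nlinarith
    nlinarith [key, h2d, hC, h]
lemma slope_extract {I : Set ℝ} (hIc : I.OrdConnected) {f : ℝ → ℝ}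
    (hf : ContinuousOn f I) (hfpos : ∀ t ∈ I, 0 < f t)
    {a b : ℝ} {α β : ℝ → ℝ} (h : IsCausalCurve I f a b α β) :
    α a < α b ∧ Set.Icc (α a) (α b) ⊆ I ∧ ∃ φ : ℝ → ℝ, Measurable φ ∧
      (∀ u ∈ Ioo (α a) (α b), (f u)^2 * (φ u)^2 ≤ 1) ∧
      (∫ u in (α a)..(α b), φ u) = β b - β a ∧
      lorLength f a b α β = ∫ u in (α a)..(α b), Real.sqrt (1 - (f u)^2 * (φ u)^2) := by
  obtain ⟨hab, hmem, hdiff, hcaus⟩ := h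
  have hamem : a ∈ Icc a b := ⟨le_refl a, hab.le⟩
  have hbmem : b ∈ Icc a b := ⟨hab.le, le_refl b⟩
  have hderiv : ∀ s ∈ Icc a b, HasDerivAt α (deriv α s) s :=
    fun s hs => ((hdiff s hs).1).hasDerivAt
  have contα : ContinuousOn α (Icc a b) :=
    fun s hs => ((hdiff s hs).1).continuousAt.continuousWithinAt
  have hmono : StrictMonoOn α (Icc a b) := by
    apply strictMonoOn_of_deriv_pos (convex_Icc a b) contα
    intro x hx
    rw [interior_Icc] at hx
    exact (hcaus x (Ioo_subset_Icc_self hx)).1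
  have hpq : α a < α b := hmono hamem hbmem hab
  have hIccI : Icc (α a) (α b) ⊆ I := hIc.out (hmem a hamem) (hmem b hbmem)
  set p := α a with hp
  set q := α b with hq
  refine ⟨hpq, hIccI, ?_⟩
  have himg : α '' Icc a b = Icc p q := by
    apply Subset.antisymm
    · rintro _ ⟨x, hx, rfl⟩
      exact ⟨hmono.monotoneOn hamem hx hx.1, hmono.monotoneOn hx hbmem hx.2⟩
    · exact intermediate_value_Icc hab.le contα
  set ι := Function.invFunOn α (Icc a b) with hι
  have hinj : InjOn α (Icc a b) := hmono.injOn
  have hli : ∀ x ∈ Icc a b, ι (α x) = x := fun x hx => hinj.leftInvOn_invFunOn hx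
  have hιmem : ∀ u ∈ Icc p q, ι u ∈ Icc a b := by
    intro u hu
    rw [← himg] at hu
    exact Function.invFunOn_mem hu
  have hri : ∀ u ∈ Icc p q, α (ι u) = u := by
    intro u hu
    rw [← himg] at hu
    exact Function.invFunOn_eq (by rcases hu with ⟨x, hx, hxu⟩; exact ⟨x, hx, hxu⟩)
  have hιlt : ∀ u ∈ Icc p q, ∀ v ∈ Icc p q, u < v → ι u < ι v := by
    intro u hu v hv huv
    by_contra hcon
    push_neg at hcon
    have := hmono.monotoneOn (hιmem v hv) (hιmem u hu) hcon
    rw [hri u hu, hri v hv] at this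
    exact absurd this (not_le.2 huv)
  -- continuity of the inverse
  have hιcont : ContinuousOn ι (Icc p q) := by
    intro u hu
    rw [ContinuousWithinAt, tendsto_order]
    constructor
    · intro x hx
      rcases lt_or_ge x a with hxa | hxa
      · exact eventually_of_mem self_mem_nhdsWithin
          (fun y hy => lt_of_lt_of_le hxa (hιmem y hy).1)
      · have hxIcc : x ∈ Icc a b := ⟨hxa, le_trans hx.le (hιmem u hu).2⟩
        have hαx : α x < u := by
          have h2 := hmono hxIcc (hιmem u hu) hx
          rwa [hri u hu] at h2
        have hev : ∀ᶠ y in 𝓝[Icc p q] u, α x < y :=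
          (eventually_gt_nhds hαx).filter_mono nhdsWithin_le_nhds
        filter_upwards [hev, self_mem_nhdsWithin] with y hy hy'
        by_contra hcon
        push_neg at hcon
        have := hmono.monotoneOn (hιmem y hy') hxIcc hcon
        rw [hri y hy'] at this
        exact absurd this (not_le.2 hy)
    · intro x hx
      rcases lt_or_ge b x with hxb | hxb
      · exact eventually_of_mem self_mem_nhdsWithin
          (fun y hy => lt_of_le_of_lt (hιmem y hy).2 hxb)
      · have hxIcc : x ∈ Icc a b := ⟨le_trans (hιmem u hu).1 hx.le, hxb⟩
        have hαx : u < α x := by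
          have h2 := hmono (hιmem u hu) hxIcc hx
          rwa [hri u hu] at h2
        have hev : ∀ᶠ y in 𝓝[Icc p q] u, y < α x :=
          (eventually_lt_nhds hαx).filter_mono nhdsWithin_le_nhds
        filter_upwards [hev, self_mem_nhdsWithin] with y hy hy'
        by_contra hcon
        push_neg at hcon
        have := hmono.monotoneOn hxIcc (hιmem y hy') hcon
        rw [hri y hy'] at this
        exact absurd this (not_le.2 hy)
  have hιat : ∀ u ∈ Ioo p q, ContinuousAt ι u := by
    intro u hu
    exact (hιcont u (Ioo_subset_Icc_self hu)).continuousAt (Icc_mem_nhds hu.1 hu.2)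
  have hιderiv : ∀ u ∈ Ioo p q, HasDerivAt ι (deriv α (ι u))⁻¹ u := by
    intro u hu
    have hu' := Ioo_subset_Icc_self hu
    refine HasDerivAt.of_local_left_inverse (hιat u hu)
      (hderiv (ι u) (hιmem u hu')) (ne_of_gt (hcaus (ι u) (hιmem u hu')).1) ?_
    filter_upwards [isOpen_Ioo.mem_nhds hu] with y hy
    exact hri y (Ioo_subset_Icc_self hy)
  -- globalized inverse
  set cl : ℝ → ℝ := fun u => max p (min u q) with hcl
  have hclmem : ∀ u, cl u ∈ Icc p q := by
    intro u
    constructor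
    · exact le_max_left _ _
    · simp only [hcl, max_le_iff]
      exact ⟨hpq.le, min_le_right _ _⟩
  have hclid : ∀ u ∈ Icc p q, cl u = u := by
    intro u hu
    simp only [hcl]
    rw [min_eq_left hu.2, max_eq_right hu.1]
  have hclmono : Monotone cl := fun u v huv =>
    max_le_max le_rfl (min_le_min huv le_rfl)
  set ιc : ℝ → ℝ := fun u => ι (cl u) with hιc
  have hιcmono : Monotone ιc := by
    intro u v huv
    rcases eq_or_lt_of_le (hclmono huv) with he | hlt
    · rw [hιc]; simp only [he]; exact le_rfl
    · exact (hιlt _ (hclmem u) _ (hclmem v) hlt).le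
  have hιcmeas : Measurable ιc := hιcmono.measurable
  set φ : ℝ → ℝ := fun u => deriv β (ιc u) * (deriv α (ιc u))⁻¹ with hφ
  have hφmeas : Measurable φ :=
    ((measurable_deriv β).comp hιcmeas).mul (((measurable_deriv α).comp hιcmeas).inv)
  have hιc_eq : ∀ u ∈ Icc p q, ιc u = ι u := fun u hu => by rw [hιc]; simp only [hclid u hu]
  -- pointwise bound
  have hbound : ∀ u ∈ Ioo p q, (f u)^2 * (φ u)^2 ≤ 1 := by
    intro u hu
    have hu' := Ioo_subset_Icc_self hu
    have hx := hιmem u hu'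
    have hca := hcaus (ι u) hx
    have hαu : α (ι u) = u := hri u hu'
    rw [hαu] at hca
    have hpos := hca.1
    rw [hφ]
    simp only [hιc_eq u hu']
    have heq : (f u)^2 * (deriv β (ι u) * (deriv α (ι u))⁻¹)^2
        = ((f u)^2 * (deriv β (ι u))^2) / (deriv α (ι u))^2 := by
      field_simp
    rw [heq, div_le_one (by positivity)]
    exact hca.2
  -- integrability of φ on (p,q)
  have hfposI : ∀ u ∈ Icc p q, 0 < f u := fun u hu => hfpos u (hIccI hu)
  have hfcont : ContinuousOn f (Icc p q) := hf.mono hIccI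
  obtain ⟨C, hC⟩ : ∃ C, ∀ u ∈ Icc p q, (f u)⁻¹ ≤ C := by
    obtain ⟨u₀, hu₀, hmax⟩ := isCompact_Icc.exists_isMaxOn (nonempty_Icc.2 hpq.le)
      (hfcont.inv₀ (fun u hu => ne_of_gt (hfposI u hu)))
    exact ⟨(f u₀)⁻¹, fun u hu => hmax hu⟩
  have hφabs : ∀ u ∈ Ioo p q, |φ u| ≤ (f u)⁻¹ := by
    intro u hu
    have hb := hbound u hu
    have hfp := hfposI u (Ioo_subset_Icc_self hu)
    have h1 : f u * |φ u| ≤ 1 := by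
      nlinarith [mul_nonneg hfp.le (abs_nonneg (φ u)), sq_abs (φ u),
        mul_pos hfp hfp]
    rw [← one_div]
    rw [le_div_iff₀ hfp]
    linarith
  have hφC : ∀ u ∈ Ioo p q, |φ u| ≤ C := fun u hu =>
    le_trans (hφabs u hu) (hC u (Ioo_subset_Icc_self hu))
  have hφint : IntervalIntegrable φ volume p q := by
    rw [intervalIntegrable_iff_integrableOn_Ioo_of_le hpq.le]
    refine Integrable.mono' (integrable_const C) hφmeas.aestronglyMeasurable.restrict ?_
    rw [ae_restrict_iff' measurableSet_Ioo]
    exact ae_of_all _ (fun u hu => hφC u hu)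
  refine ⟨φ, hφmeas, hbound, ?_, ?_⟩
  · -- FTC : ∫ φ = β b - β a
    have contβ : ContinuousOn β (Icc a b) :=
      fun s hs => ((hdiff s hs).2).continuousAt.continuousWithinAt
    have hgcont : ContinuousOn (β ∘ ι) (Icc p q) :=
      contβ.comp hιcont (fun u hu => hιmem u hu)
    have hgd : ∀ u ∈ Ioo p q, HasDerivWithinAt (β ∘ ι) (φ u) (Ioi u) u := by
      intro u hu
      have hu' := Ioo_subset_Icc_self hu
      have hd : HasDerivAt (β ∘ ι) (deriv β (ι u) * (deriv α (ι u))⁻¹) u :=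
        HasDerivAt.comp u ((hdiff (ι u) (hιmem u hu')).2.hasDerivAt) (hιderiv u hu)
      have hφu : φ u = deriv β (ι u) * (deriv α (ι u))⁻¹ := by
        rw [hφ]; simp only [hιc_eq u hu']
      rw [hφu]
      exact hd.hasDerivWithinAt
    have hFTC := intervalIntegral.integral_eq_sub_of_hasDeriv_right_of_le hpq.le
      hgcont hgd hφint
    rw [hFTC]
    have hιq : ι q = b := by rw [hq]; exact hli b hbmem
    have hιp : ι p = a := by rw [hp]; exact hli a hamem
    simp only [Function.comp_apply, hιq, hιp]
  · -- change of variables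
    have himgIoo : α '' Ioo a b = Ioo p q := by
      apply Subset.antisymm
      · rintro _ ⟨x, hx, rfl⟩
        exact ⟨hmono hamem (Ioo_subset_Icc_self hx) hx.1,
          hmono (Ioo_subset_Icc_self hx) hbmem hx.2⟩
      · exact intermediate_value_Ioo hab.le contα
    have hCoV := MeasureTheory.integral_image_eq_integral_abs_deriv_smul measurableSet_Ioo
      (fun x hx => (hderiv x (Ioo_subset_Icc_self hx)).hasDerivWithinAt)
      (hinj.mono Ioo_subset_Icc_self) (fun u => Real.sqrt (1 - (f u)^2 * (φ u)^2))
    rw [himgIoo] at hCoV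
    have hpt : ∀ x ∈ Ioo a b, |deriv α x| • Real.sqrt (1 - (f (α x))^2 * (φ (α x))^2)
        = Real.sqrt ((deriv α x)^2 - (f (α x))^2 * (deriv β x)^2) := by
      intro x hx
      have hx' := Ioo_subset_Icc_self hx
      have hαmem : α x ∈ Icc p q := himg ▸ mem_image_of_mem α hx'
      have hφx : φ (α x) = deriv β x * (deriv α x)⁻¹ := by
        rw [hφ]; simp only [hιc_eq _ hαmem, hli x hx']
      have hpos := (hcaus x hx').1
      rw [hφx, smul_eq_mul, abs_of_pos hpos]
      rw [show deriv α x * Real.sqrt (1 - f (α x)^2 * (deriv β x * (deriv α x)⁻¹)^2)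
          = Real.sqrt ((deriv α x)^2 * (1 - f (α x)^2 * (deriv β x * (deriv α x)⁻¹)^2)) by
        rw [Real.sqrt_mul (sq_nonneg _), Real.sqrt_sq hpos.le]]
      congr 1
      field_simp
    rw [lorLength, intervalIntegral.integral_of_le hab.le,
      MeasureTheory.integral_Ioc_eq_integral_Ioo,
      intervalIntegral.integral_of_le hpq.le, MeasureTheory.integral_Ioc_eq_integral_Ioo,
      hCoV]
    exact MeasureTheory.setIntegral_congr_fun measurableSet_Ioo
      (fun x hx => (hpt x hx).symm)

lemma lorLength_nonneg {f : ℝ → ℝ} {a b : ℝ} (hab : a ≤ b) (α β : ℝ → ℝ) :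
    0 ≤ lorLength f a b α β :=
  intervalIntegral.integral_nonneg hab (fun u _ => Real.sqrt_nonneg _)

lemma lorLength_le {I : Set ℝ} (hIc : I.OrdConnected) {f : ℝ → ℝ}
    (hf : ContinuousOn f I) (hfpos : ∀ t ∈ I, 0 < f t)
    {a b : ℝ} {α β : ℝ → ℝ} (h : IsCausalCurve I f a b α β) :
    lorLength f a b α β ≤ α b - α a := by
  obtain ⟨hpq, hIccI, φ, hmeas, hbound, _, hlen⟩ := slope_extract hIc hf hfpos h
  rw [hlen]
  set p := α a
  set q := α b
  -- replace f by a measurable clamp on [p,q]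
  set cl : ℝ → ℝ := fun u => max p (min u q) with hcl
  have hclmem : ∀ u, cl u ∈ Icc p q := fun u =>
    ⟨le_max_left _ _, max_le hpq.le (min_le_right _ _)⟩
  have hclid : ∀ u ∈ Icc p q, cl u = u := fun u hu => by
    simp only [hcl]; rw [min_eq_left hu.2, max_eq_right hu.1]
  have hclcont : Continuous cl := continuous_const.max (continuous_id.min continuous_const)
  have hcf : Continuous (f ∘ cl) :=
    (hf.mono hIccI).comp_continuous hclcont (fun u => hclmem u)
  have hcongr : EqOn (fun u => Real.sqrt (1 - (f u)^2 * (φ u)^2))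
      (fun u => Real.sqrt (1 - ((f ∘ cl) u)^2 * (φ u)^2)) (uIcc p q) := by
    intro u hu
    rw [uIcc_of_le hpq.le] at hu
    simp only [Function.comp_apply, hclid u hu]
  rw [intervalIntegral.integral_congr hcongr]
  have hint : IntervalIntegrable (fun u => Real.sqrt (1 - ((f ∘ cl) u)^2 * (φ u)^2))
      volume p q := by
    apply bdd_meas_intervalIntegrable (K := 1)
    · exact Real.continuous_sqrt.measurable.comp
        (measurable_const.sub ((hcf.measurable.pow_const 2).mul (hmeas.pow_const 2)))
    · intro u
      rw [abs_of_nonneg (Real.sqrt_nonneg _)]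
      apply Real.sqrt_le_one.2
      nlinarith [sq_nonneg ((f ∘ cl) u * φ u)]
  calc ∫ u in p..q, Real.sqrt (1 - ((f ∘ cl) u)^2 * (φ u)^2)
      ≤ ∫ _ in p..q, (1:ℝ) := by
        apply intervalIntegral.integral_mono_on hpq.le hint intervalIntegrable_const
        intro u _
        apply Real.sqrt_le_one.2
        nlinarith [sq_nonneg ((f ∘ cl) u * φ u)]
    _ = q - p := by simp

lemma timeSep_bddAbove {I : Set ℝ} (hIc : I.OrdConnected) {f : ℝ → ℝ}
    (hf : ContinuousOn f I) (hfpos : ∀ t ∈ I, 0 < f t) (p q : ℝ × ℝ) :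
    BddAbove (insert 0 {L | ∃ a b α β, IsCausalCurve I f a b α β ∧
      α a = p.1 ∧ β a = p.2 ∧ α b = q.1 ∧ β b = q.2 ∧ L = lorLength f a b α β}) := by
  refine ⟨max 0 (q.1 - p.1), ?_⟩
  rintro L hL
  rcases hL with rfl | ⟨a, b, α, β, hc, ha, _, hb, _, rfl⟩
  · exact le_max_left _ _
  · refine le_trans ?_ (le_max_right _ _)
    have h := lorLength_le hIc hf hfpos hc
    rwa [ha, hb] at h

lemma timeSep_nonneg {I : Set ℝ} (hIc : I.OrdConnected) {f : ℝ → ℝ}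
    (hf : ContinuousOn f I) (hfpos : ∀ t ∈ I, 0 < f t) (p q : ℝ × ℝ) :
    0 ≤ timeSep I f p q :=
  le_csSup (timeSep_bddAbove hIc hf hfpos p q) (mem_insert 0 _)

lemma abs_le_inv_of_sq {A B : ℝ} (hA : 0 < A) (h : A^2 * B^2 ≤ 1) : |B| ≤ A⁻¹ := by
  rw [← one_div, le_div_iff₀ hA]
  nlinarith [abs_nonneg B, sq_abs B, mul_pos hA hA, mul_nonneg (abs_nonneg B) hA.le]

lemma arith_theta {θ T ε : ℝ} (h2 : θ*(3*T+3) ≤ ε) (hθ : 0 ≤ θ) (hT : 0 ≤ T) :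
    θ*T ≤ ε/3 := by nlinarith

lemma arith_k {k T ε : ℝ} (h2 : k*(3*T+3) = ε) (hk : 0 ≤ k) (hT : 0 ≤ T) :
    k/2*T ≤ ε/3 := by nlinarith

lemma arith_clamp_mix {a c θ : ℝ} (ha : |a| ≤ c) (hc : 0 ≤ c) (hθ0 : 0 ≤ θ) (hθ1 : θ ≤ 1) :
    |(1-θ)*a + θ*c| ≤ c := by
  have h1 := abs_le.1 ha
  rw [abs_le]
  constructor <;> nlinarith

lemma arith_scale_sq {κ x F : ℝ} (hκ0 : 0 ≤ κ) (hκ1 : κ ≤ 1) :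
    1 - F^2*x^2 ≤ 1 - F^2*(κ*x)^2 := by
  nlinarith [mul_nonneg (mul_nonneg (sub_nonneg.2 hκ1) (by linarith : (0:ℝ) ≤ 1 + κ))
    (sq_nonneg (F*x))]

lemma abs_mul_sq_le_one {F a cc : ℝ} (hF : 0 < F) (ha : |a| ≤ cc) (hFc : F * cc = 1) :
    (F*a)^2 ≤ 1 := by
  have h1 : |F*a| ≤ 1 := by
    rw [abs_mul, abs_of_pos hF]
    calc F * |a| ≤ F * cc := mul_le_mul_of_nonneg_left ha hF.le
      _ = 1 := hFc
  calc (F*a)^2 = |F*a|^2 := (sq_abs _).symm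
    _ ≤ 1 := by nlinarith [abs_nonneg (F*a)]

lemma aux_final_point {x y z θ k Mf dAbs : ℝ}
    (hx1 : x^2 ≤ 1) (hy1 : y^2 ≤ 1)
    (hz : z = (1-θ)*x + θ)
    (hθ0 : 0 ≤ θ) (hθ1 : θ ≤ 1) (hk : 0 < k)
    (hyx : |y - x| ≤ Mf * dAbs) :
    Real.sqrt (1 - y^2) - (θ + k/2 + (Mf/k) * dAbs) ≤ Real.sqrt (1 - z^2) := by
  have h1 : (1-θ) * Real.sqrt (1 - x^2) ≤ Real.sqrt (1 - z^2) := by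
    rw [hz]; exact aux_sqrt_mix hx1 hθ0 hθ1
  have h2 := aux_sqrt_diff hy1 hx1 hk
  have h3 : |y - x|/k ≤ (Mf/k) * dAbs := by
    calc |y-x|/k ≤ (Mf*dAbs)/k := by gcongr
      _ = (Mf/k)*dAbs := by ring
  have h4 : Real.sqrt (1 - x^2) ≤ 1 := Real.sqrt_le_one.2 (by linarith [sq_nonneg x])
  have h5 : 0 ≤ Real.sqrt (1 - x^2) := Real.sqrt_nonneg _
  have h6 : Real.sqrt (1-x^2) - θ ≤ (1-θ)*Real.sqrt (1-x^2) := by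
    nlinarith [mul_le_mul_of_nonneg_left h4 hθ0]
  linarith

lemma arith_disp {X d σ' η θ d₃ : ℝ} (h5 : (1-θ)*(d-η) ≤ (1-θ)*X) (hησ : η ≤ θ*σ')
    (hθ : 0 ≤ θ) (hη : 0 ≤ η) (hd₃ : d₃ ≤ d) : d₃ ≤ (1-θ)*X + θ*(d+σ') := by nlinarith

lemma key_step {I : Set ℝ} (hIc : I.OrdConnected) {f : ℝ → ℝ}
    (hf : ContinuousOn f I) (hfpos : ∀ t ∈ I, 0 < f t)
    {r s t d₁ d₂ d₃ : ℝ} (hd₃ : 0 ≤ d₃) (hd₁₂ : d₃ ≤ d₁ + d₂)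
    {a₁ b₁ : ℝ} {α₁ β₁ : ℝ → ℝ} {a₂ b₂ : ℝ} {α₂ β₂ : ℝ → ℝ}
    (h₁ : IsCausalCurve I f a₁ b₁ α₁ β₁) (e₁ : α₁ a₁ = r) (e₁' : β₁ a₁ = 0)
    (e₁'' : α₁ b₁ = s) (e₁''' : β₁ b₁ = d₁)
    (h₂ : IsCausalCurve I f a₂ b₂ α₂ β₂) (e₂ : α₂ a₂ = s) (e₂' : β₂ a₂ = 0)
    (e₂'' : α₂ b₂ = t) (e₂''' : β₂ b₂ = d₂) :
    lorLength f a₁ b₁ α₁ β₁ + lorLength f a₂ b₂ α₂ β₂ ≤ timeSep I f (r, 0) (t, d₃) := by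
  obtain ⟨hrs, hIrs, φ₁, hφ₁m, hφ₁b, hφ₁i, hφ₁l⟩ := slope_extract hIc hf hfpos h₁
  simp only [e₁, e₁'', e₁', e₁'''] at hrs hIrs hφ₁b hφ₁i hφ₁l
  rw [sub_zero] at hφ₁i
  obtain ⟨hst, hIst, φ₂, hφ₂m, hφ₂b, hφ₂i, hφ₂l⟩ := slope_extract hIc hf hfpos h₂
  simp only [e₂, e₂'', e₂', e₂'''] at hst hIst hφ₂b hφ₂i hφ₂l
  rw [sub_zero] at hφ₂i
  have hrt : r < t := hrs.trans hst
  have hT : (0:ℝ) < t - r := by linarith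
  set T := t - r with hTdef
  have hIrt : Icc r t ⊆ I := hIc.out (hIrs ⟨le_rfl, hrs.le⟩) (hIst ⟨hst.le, le_rfl⟩)
  -- clamped version of f
  set cl : ℝ → ℝ := fun u => max r (min u t) with hcl
  have hclmem : ∀ u, cl u ∈ Icc r t := fun u =>
    ⟨le_max_left _ _, max_le hrt.le (min_le_right _ _)⟩
  have hclid : ∀ u ∈ Icc r t, cl u = u := fun u hu => by
    simp only [hcl]; rw [min_eq_left hu.2, max_eq_right hu.1]
  have hclcont : Continuous cl := continuous_const.max (continuous_id.min continuous_const)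
  set ft : ℝ → ℝ := fun u => f (cl u) with hft
  have hftcont : Continuous ft := (hf.mono hIrt).comp_continuous hclcont (fun u => hclmem u)
  have hftpos : ∀ u, 0 < ft u := fun u => hfpos _ (hIrt (hclmem u))
  have hfteq : ∀ u ∈ Icc r t, ft u = f u := fun u hu => by
    simp only [hft]; rw [hclid u hu]
  -- min and max of ft
  obtain ⟨u₀, hu₀, hmin⟩ := isCompact_Icc.exists_isMinOn (nonempty_Icc.2 hrt.le)
    hftcont.continuousOn
  obtain ⟨u₁, hu₁, hmax⟩ := isCompact_Icc.exists_isMaxOn (nonempty_Icc.2 hrt.le)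
    hftcont.continuousOn
  set m := ft u₀ with hm
  set Mf := ft u₁ with hMf
  have hmpos : 0 < m := hftpos u₀
  have hMfpos : 0 < Mf := hftpos u₁
  have hmle : ∀ u, m ≤ ft u := by
    intro u
    have h1 := hmin (hclmem u)
    have h2 : ft (cl u) = ft u := by simp only [hft]; rw [hclid (cl u) (hclmem u)]
    simpa [h2] using h1
  have hMfge : ∀ u, ft u ≤ Mf := by
    intro u
    have h1 := hmax (hclmem u)
    have h2 : ft (cl u) = ft u := by simp only [hft]; rw [hclid (cl u) (hclmem u)]
    simpa [h2] using h1
  set c : ℝ → ℝ := fun u => (ft u)⁻¹ with hc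
  have hccont : Continuous c := hftcont.inv₀ (fun u => ne_of_gt (hftpos u))
  have hcpos : ∀ u, 0 < c u := fun u => inv_pos.2 (hftpos u)
  have hcle : ∀ u, c u ≤ m⁻¹ := fun u =>
    inv_anti₀ hmpos (hmle u)
  have hftc : ∀ u, ft u * c u = 1 := fun u => mul_inv_cancel₀ (ne_of_gt (hftpos u))
  -- concatenated and clamped slope
  set φ : ℝ → ℝ := fun u => if u < s then φ₁ u else φ₂ u with hφdef
  have hφm : Measurable φ :=
    Measurable.ite (measurableSet_lt measurable_id measurable_const) hφ₁m hφ₂m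
  set φc : ℝ → ℝ := fun u => max (-(c u)) (min (c u) (φ u)) with hφc
  have hφcm : Measurable φc :=
    (hccont.measurable.neg).max ((hccont.measurable).min hφm)
  have hφcb : ∀ u, |φc u| ≤ c u := fun u => clamp_abs_le (hcpos u).le
  have hφcbm : ∀ u, |φc u| ≤ m⁻¹ := fun u => le_trans (hφcb u) (hcle u)
  have hφceq₁ : ∀ u ∈ Ioo r s, φc u = φ₁ u := by
    intro u hu
    have huIcc : u ∈ Icc r t := ⟨hu.1.le, le_trans hu.2.le hst.le⟩
    have hfu : 0 < f u := hfpos u (hIrs ⟨hu.1.le, hu.2.le⟩)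
    have habs : |φ₁ u| ≤ c u := by
      have h := abs_le_inv_of_sq hfu (hφ₁b u hu)
      show |φ₁ u| ≤ (ft u)⁻¹
      rwa [hfteq u huIcc]
    have h1 := abs_le.1 habs
    simp only [hφc, hφdef, if_pos hu.2]
    rw [min_eq_right h1.2, max_eq_right h1.1]
  have hφceq₂ : ∀ u ∈ Ioo s t, φc u = φ₂ u := by
    intro u hu
    have huIcc : u ∈ Icc r t := ⟨le_trans hrs.le hu.1.le, hu.2.le⟩
    have hfu : 0 < f u := hfpos u (hIst ⟨hu.1.le, hu.2.le⟩)
    have habs : |φ₂ u| ≤ c u := by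
      have h := abs_le_inv_of_sq hfu (hφ₂b u hu)
      show |φ₂ u| ≤ (ft u)⁻¹
      rwa [hfteq u huIcc]
    have h1 := abs_le.1 habs
    simp only [hφc, hφdef, if_neg (not_lt.2 hu.1.le)]
    rw [min_eq_right h1.2, max_eq_right h1.1]
  -- congruence helper
  have hcongrIoo : ∀ (g₁ g₂ : ℝ → ℝ) (x y : ℝ), x ≤ y → (∀ u ∈ Ioo x y, g₁ u = g₂ u) →
      ∫ u in x..y, g₁ u = ∫ u in x..y, g₂ u := by
    intro g₁ g₂ x y hxy heq
    rw [intervalIntegral.integral_of_le hxy, intervalIntegral.integral_of_le hxy,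
      MeasureTheory.integral_Ioc_eq_integral_Ioo, MeasureTheory.integral_Ioc_eq_integral_Ioo]
    exact MeasureTheory.setIntegral_congr_fun measurableSet_Ioo heq
  -- integrability helpers
  have hφcint : ∀ x y : ℝ, IntervalIntegrable φc volume x y :=
    bdd_meas_intervalIntegrable hφcm hφcbm
  have hsq_meas : Measurable (fun u => Real.sqrt (1 - (ft u)^2 * (φc u)^2)) :=
    Real.continuous_sqrt.measurable.comp
      (measurable_const.sub ((hftcont.measurable.pow_const 2).mul (hφcm.pow_const 2)))
  have hsq_bdd : ∀ u, |Real.sqrt (1 - (ft u)^2 * (φc u)^2)| ≤ 1 := by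
    intro u
    rw [abs_of_nonneg (Real.sqrt_nonneg _)]
    exact Real.sqrt_le_one.2 (by nlinarith [sq_nonneg (ft u * φc u)])
  have hsqint : ∀ x y : ℝ, IntervalIntegrable
      (fun u => Real.sqrt (1 - (ft u)^2 * (φc u)^2)) volume x y :=
    bdd_meas_intervalIntegrable hsq_meas hsq_bdd
  -- D = d₁ + d₂
  have hD1 : ∫ u in r..s, φc u = d₁ := by
    rw [hcongrIoo φc φ₁ r s hrs.le hφceq₁]; exact hφ₁i
  have hD2 : ∫ u in s..t, φc u = d₂ := by
    rw [hcongrIoo φc φ₂ s t hst.le hφceq₂]; exact hφ₂i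
  have hD : ∫ u in r..t, φc u = d₁ + d₂ := by
    rw [← intervalIntegral.integral_add_adjacent_intervals (hφcint r s) (hφcint s t), hD1, hD2]
  -- L̃ = L₁ + L₂
  have hL1 : ∫ u in r..s, Real.sqrt (1 - (ft u)^2 * (φc u)^2) = lorLength f a₁ b₁ α₁ β₁ := by
    rw [hcongrIoo _ (fun u => Real.sqrt (1 - (f u)^2 * (φ₁ u)^2)) r s hrs.le ?_, ← hφ₁l]
    intro u hu
    rw [hφceq₁ u hu, hfteq u ⟨hu.1.le, le_trans hu.2.le hst.le⟩]
  have hL2 : ∫ u in s..t, Real.sqrt (1 - (ft u)^2 * (φc u)^2) = lorLength f a₂ b₂ α₂ β₂ := by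
    rw [hcongrIoo _ (fun u => Real.sqrt (1 - (f u)^2 * (φ₂ u)^2)) s t hst.le ?_, ← hφ₂l]
    intro u hu
    rw [hφceq₂ u hu, hfteq u ⟨le_trans hrs.le hu.1.le, hu.2.le⟩]
  have hLt : ∫ u in r..t, Real.sqrt (1 - (ft u)^2 * (φc u)^2)
      = lorLength f a₁ b₁ α₁ β₁ + lorLength f a₂ b₂ α₂ β₂ := by
    rw [← intervalIntegral.integral_add_adjacent_intervals (hsqint r s) (hsqint s t), hL1, hL2]
  -- slack
  have hcint : ∀ x y : ℝ, IntervalIntegrable c volume x y :=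
    fun x y => hccont.intervalIntegrable x y
  set σ := ∫ u in r..t, (c u - φc u) with hσdef
  have hσsplit : σ = (∫ u in r..t, c u) - ∫ u in r..t, φc u := by
    rw [hσdef]; exact intervalIntegral.integral_sub (hcint r t) (hφcint r t)
  have hσnonneg : 0 ≤ σ := intervalIntegral.integral_nonneg hrt.le
    (fun u _ => by have h := abs_le.1 (hφcb u); linarith [h.2])
  rcases eq_or_lt_of_le hσnonneg with hσ0 | hσpos
  · -- null case : total length is 0
    have hintIoc : IntegrableOn (fun u => c u - φc u) (Ioc r t) volume := by
      have h := (hcint r t).sub (hφcint r t)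
      rwa [intervalIntegrable_iff, uIoc_of_le hrt.le] at h
    have h0 : ∫ u in Ioc r t, (c u - φc u) = 0 := by
      have he : σ = ∫ u in Ioc r t, (c u - φc u) := by
        rw [hσdef]; exact intervalIntegral.integral_of_le hrt.le
      rw [← he, ← hσ0]
    have hnn : (0 : ℝ → ℝ) ≤ (fun u => c u - φc u) := by
      intro u
      have h := abs_le.1 (hφcb u)
      simp only [Pi.zero_apply]
      linarith [h.2]
    have hae := (MeasureTheory.integral_eq_zero_iff_of_nonneg hnn hintIoc).1 h0
    have hLt0 : ∫ u in r..t, Real.sqrt (1 - (ft u)^2 * (φc u)^2) = 0 := by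
      rw [intervalIntegral.integral_of_le hrt.le]
      rw [show (0:ℝ) = ∫ (_ : ℝ) in Ioc r t, (0:ℝ) by simp]
      apply MeasureTheory.integral_congr_ae
      filter_upwards [hae] with u hu
      have hcu : φc u = c u := by
        have : c u - φc u = 0 := hu
        linarith
      rw [hcu]
      have h2 : (ft u)^2 * (c u)^2 = 1 := by rw [← mul_pow, hftc u, one_pow]
      rw [h2, sub_self, Real.sqrt_zero]
    have hts := timeSep_nonneg hIc hf hfpos (r,0) (t,d₃)
    linarith [hLt, hLt0, hts]
  · -- main case: positive slack
    refine le_of_forall_pos_le_add ?_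
    intro ε hε
    -- small parameters
    set θ := min (1/2) (ε/(3*T+3)) with hθdef
    have hθpos : 0 < θ := lt_min (by norm_num) (by positivity)
    have hθhalf : θ ≤ 1/2 := min_le_left _ _
    have hθ1 : θ ≤ 1 := by linarith
    have hθT : θ * T ≤ ε/3 := by
      have h1 : θ ≤ ε/(3*T+3) := min_le_right _ _
      have h2 : θ * (3*T+3) ≤ ε := by
        have h3 := mul_le_mul_of_nonneg_right h1 (show (0:ℝ) ≤ 3*T+3 by positivity)
        rwa [div_mul_cancel₀ ε (show (3*T+3) ≠ 0 by positivity)] at h3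
      exact arith_theta h2 hθpos.le hT.le
    set k := ε/(3*T+3) with hkdef
    have hkpos : 0 < k := by positivity
    have hkT : k/2 * T ≤ ε/3 := by
      have h2 : k * (3*T+3) = ε := div_mul_cancel₀ ε (by positivity)
      exact arith_k h2 hkpos.le hT.le
    set η := min (θ*σ) (ε*k/(3*Mf)) with hηdef
    have hηpos : 0 < η := lt_min (mul_pos hθpos hσpos) (by positivity)
    have hησ : η ≤ θ*σ := min_le_left _ _
    have hηk : Mf/k * η ≤ ε/3 := by
      have h1 : η ≤ ε*k/(3*Mf) := min_le_right _ _
      have h2 : Mf * η ≤ ε * k / 3 := by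
        have h3 := mul_le_mul_of_nonneg_left h1 hMfpos.le
        calc Mf * η ≤ Mf * (ε*k/(3*Mf)) := h3
          _ = ε*k/3 := by field_simp
      calc Mf/k*η = Mf*η/k := by ring
        _ ≤ (ε*k/3)/k := by gcongr
        _ = ε/3 := by field_simp
    -- L¹ approximation of φc by a continuous function
    set F : ℝ → ℝ := Set.indicator (Icc r t) φc with hFdef
    have hφcIcc : IntegrableOn φc (Icc r t) volume := by
      have hconst : IntegrableOn (fun _ => m⁻¹) (Icc r t) volume :=
        integrableOn_const measure_Icc_lt_top.ne
      exact Integrable.mono' hconst hφcm.aestronglyMeasurable.restrict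
        (ae_of_all _ (fun u => hφcbm u))
    have hFint : Integrable F volume := hφcIcc.integrable_indicator measurableSet_Icc
    obtain ⟨ψ₀, hψ₀supp, hψ₀L1, hψ₀cont, hψ₀int⟩ :=
      hFint.exists_hasCompactSupport_integral_sub_le hηpos
    set ψ₁ : ℝ → ℝ := fun u => max (-(c u)) (min (c u) (ψ₀ u)) with hψ₁def
    have hψ₁cont : Continuous ψ₁ := (hccont.neg).max (hccont.min hψ₀cont)
    have hψ₁b : ∀ u, |ψ₁ u| ≤ c u := fun u => clamp_abs_le (hcpos u).le
    have hψ₁close : ∀ u ∈ Icc r t, |ψ₁ u - φc u| ≤ |F u - ψ₀ u| := by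
      intro u hu
      have hFu : F u = φc u := Set.indicator_of_mem hu φc
      rw [abs_sub_comm (F u) (ψ₀ u), hFu]
      exact clamp_close (hφcb u)
    have habs_int : IntervalIntegrable (fun u => |ψ₁ u - φc u|) volume r t := by
      apply bdd_meas_intervalIntegrable (K := m⁻¹ + m⁻¹)
        ((hψ₁cont.measurable.sub hφcm).abs)
      intro u
      rw [abs_abs]
      have h1 : |ψ₁ u - φc u| ≤ |ψ₁ u| + |φc u| := by
        have := abs_sub_le (ψ₁ u) 0 (φc u)
        simpa using this
      have h2 : |ψ₁ u| ≤ m⁻¹ := le_trans (hψ₁b u) (hcle u)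
      exact (show |ψ₁ u - φc u| ≤ m⁻¹ + m⁻¹ by linarith [hφcbm u])
    have hdist : ∫ u in r..t, |ψ₁ u - φc u| ≤ η := by
      have hFψ : Integrable (fun u => |F u - ψ₀ u|) volume := by
        have := (hFint.sub hψ₀int).norm
        simpa [Real.norm_eq_abs] using this
      calc ∫ u in r..t, |ψ₁ u - φc u| ≤ ∫ u in r..t, |F u - ψ₀ u| :=
            intervalIntegral.integral_mono_on hrt.le habs_int
              (hFψ.intervalIntegrable) (fun u hu => hψ₁close u hu)
        _ = ∫ u in Ioc r t, |F u - ψ₀ u| := intervalIntegral.integral_of_le hrt.le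
        _ ≤ ∫ u, |F u - ψ₀ u| :=
            MeasureTheory.setIntegral_le_integral hFψ (ae_of_all _ (fun u => abs_nonneg _))
        _ ≤ η := by simpa [Real.norm_eq_abs] using hψ₀L1
    -- the mixed slope
    set ψ : ℝ → ℝ := fun u => (1-θ) * ψ₁ u + θ * c u with hψdef
    have hψcont : Continuous ψ :=
      (continuous_const.mul hψ₁cont).add (continuous_const.mul hccont)
    have hψb : ∀ u, |ψ u| ≤ c u := fun u =>
      arith_clamp_mix (hψ₁b u) (hcpos u).le hθpos.le hθ1
    -- displacement of ψ
    have hψval : ∫ u in r..t, ψ u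
        = (1-θ) * (∫ u in r..t, ψ₁ u) + θ * (∫ u in r..t, c u) := by
      rw [hψdef]
      rw [intervalIntegral.integral_add (f := fun u => (1-θ) * ψ₁ u) (g := fun u => θ * c u)
          ((continuous_const.mul hψ₁cont).intervalIntegrable r t)
        ((continuous_const.mul hccont).intervalIntegrable r t),
        intervalIntegral.integral_const_mul, intervalIntegral.integral_const_mul]
    have hψ₁val : (d₁ + d₂) - η ≤ ∫ u in r..t, ψ₁ u := by
      have h1 : (∫ u in r..t, ψ₁ u) - (∫ u in r..t, φc u) = ∫ u in r..t, (ψ₁ u - φc u) :=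
        (intervalIntegral.integral_sub (hψ₁cont.intervalIntegrable r t) (hφcint r t)).symm
      have h2 : |∫ u in r..t, (ψ₁ u - φc u)| ≤ ∫ u in r..t, |ψ₁ u - φc u| :=
        intervalIntegral.abs_integral_le_integral_abs hrt.le
      have h3 := abs_le.1 (le_trans h2 hdist)
      rw [← h1] at h3
      rw [hD] at h3
      linarith [h3.1]
    have hcval : (∫ u in r..t, c u) = (d₁ + d₂) + σ := by
      have h := hσsplit
      rw [hD] at h
      linarith
    have hdisp : d₃ ≤ ∫ u in r..t, ψ u := by
      rw [hψval, hcval]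
      have h5 : (1-θ)*((d₁+d₂)-η) ≤ (1-θ) * (∫ u in r..t, ψ₁ u) :=
        mul_le_mul_of_nonneg_left hψ₁val (by linarith)
      exact arith_disp h5 hησ hθpos.le hηpos.le hd₁₂
    -- the curve
    set Tψ := ∫ u in r..t, ψ u with hTψdef
    have hTψ0 : 0 ≤ Tψ := le_trans hd₃ hdisp
    set κ := d₃ / Tψ with hκdef
    have hκ0 : 0 ≤ κ := div_nonneg hd₃ hTψ0
    have hκ1 : κ ≤ 1 := by
      rcases eq_or_lt_of_le hTψ0 with h0 | h0
      · rw [hκdef, ← h0, div_zero]; norm_num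
      · rw [hκdef, div_le_one h0]; exact hdisp
    have hκT : κ * Tψ = d₃ := by
      rcases eq_or_lt_of_le hTψ0 with h0 | h0
      · have hd0 : d₃ = 0 := le_antisymm (h0 ▸ hdisp) hd₃
        rw [hκdef, hd0, zero_div, zero_mul]
      · rw [hκdef]; field_simp
    set B : ℝ → ℝ := fun u => κ * ∫ v in r..u, ψ v with hBdef
    have hBder : ∀ u, HasDerivAt B (κ * ψ u) u := fun u =>
      ((hψcont.integral_hasStrictDerivAt r u).hasDerivAt).const_mul κ
    have hBderiv : ∀ u, deriv B u = κ * ψ u := fun u => (hBder u).deriv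
    have hcausal : IsCausalCurve I f r t id B := by
      refine ⟨hrt, fun u hu => by simpa using hIrt hu,
        fun u hu => ⟨differentiableAt_id, (hBder u).differentiableAt⟩, ?_⟩
      intro u hu
      have hid : deriv (id : ℝ → ℝ) u = 1 := deriv_id u
      constructor
      · rw [hid]; norm_num
      · rw [hid, hBderiv u, one_pow]
        have hfu : f (id u) = ft u := by
          simp only [id_eq]; exact (hfteq u hu).symm
        rw [hfu]
        have h1 : |κ * ψ u| ≤ c u := by
          rw [abs_mul, abs_of_nonneg hκ0]
          calc κ * |ψ u| ≤ 1 * |ψ u| := mul_le_mul_of_nonneg_right hκ1 (abs_nonneg _)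
            _ = |ψ u| := one_mul _
            _ ≤ c u := hψb u
        have h2 : (κ * ψ u)^2 ≤ (c u)^2 := by
          rw [← sq_abs (κ * ψ u)]
          exact pow_le_pow_left₀ (abs_nonneg _) h1 2
        have h3 : (ft u)^2 * (c u)^2 = 1 := by rw [← mul_pow, hftc u, one_pow]
        calc (ft u)^2 * (κ * ψ u)^2 ≤ (ft u)^2 * (c u)^2 :=
              mul_le_mul_of_nonneg_left h2 (sq_nonneg _)
          _ = 1 := h3
    have hmem : lorLength f r t id B ∈ (insert (0:ℝ)
        {L | ∃ a b α β, IsCausalCurve I f a b α β ∧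
          α a = (r, (0:ℝ)).1 ∧ β a = (r, (0:ℝ)).2 ∧ α b = (t, d₃).1 ∧ β b = (t, d₃).2 ∧
          L = lorLength f a b α β}) := by
      refine mem_insert_iff.2 (Or.inr ⟨r, t, id, B, hcausal, rfl, ?_, rfl, ?_, rfl⟩)
      · show B r = 0
        simp [hBdef]
      · show B t = d₃
        rw [hBdef]
        simp only
        rw [← hTψdef, hκT]
    have hlen_eq : lorLength f r t id B
        = ∫ u in r..t, Real.sqrt (1 - (f u)^2 * (κ * ψ u)^2) := by
      rw [lorLength]
      apply intervalIntegral.integral_congr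
      intro u _
      show Real.sqrt ((deriv id u)^2 - (f (id u))^2 * (deriv B u)^2)
          = Real.sqrt (1 - (f u)^2 * (κ * ψ u)^2)
      rw [hBderiv u, deriv_id u, one_pow, id_eq]
    have hcont_int1 : ∀ z : ℝ, Continuous fun u => Real.sqrt (1 - (ft u)^2 * (z * ψ u)^2) := by
      intro z
      apply Real.continuous_sqrt.comp
      exact continuous_const.sub (((hftcont.pow 2)).mul ((continuous_const.mul hψcont).pow 2))
    have hstep1 : ∫ u in r..t, Real.sqrt (1 - (ft u)^2 * (ψ u)^2) ≤ lorLength f r t id B := by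
      rw [hlen_eq]
      rw [hcongrIoo (fun u => Real.sqrt (1 - (f u)^2 * (κ * ψ u)^2))
        (fun u => Real.sqrt (1 - (ft u)^2 * (κ * ψ u)^2)) r t hrt.le
        (fun u hu => by
          have h := hfteq u (Ioo_subset_Icc_self hu)
          show Real.sqrt (1 - (f u)^2 * (κ * ψ u)^2) = Real.sqrt (1 - (ft u)^2 * (κ * ψ u)^2)
          rw [h])]
      apply intervalIntegral.integral_mono_on hrt.le ?_ ?_
      · intro u _
        exact Real.sqrt_le_sqrt (arith_scale_sq hκ0 hκ1)
      · have h := hcont_int1 1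
        simp only [one_mul] at h
        exact h.intervalIntegrable r t
      · exact (hcont_int1 κ).intervalIntegrable r t
    -- pointwise estimate
    have hpoint : ∀ u ∈ Icc r t, Real.sqrt (1 - (ft u)^2 * (φc u)^2)
        - (θ + k/2 + (Mf/k) * |ψ₁ u - φc u|) ≤ Real.sqrt (1 - (ft u)^2 * (ψ u)^2) := by
      intro u _
      have e1 : (ft u)^2 * (ψ u)^2 = (ft u * ψ u)^2 := (mul_pow _ _ 2).symm
      have e2 : (ft u)^2 * (φc u)^2 = (ft u * φc u)^2 := (mul_pow _ _ 2).symm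
      rw [e1, e2]
      refine aux_final_point (x := ft u * ψ₁ u) ?_ ?_ ?_ hθpos.le hθ1 hkpos ?_
      · exact abs_mul_sq_le_one (hftpos u) (hψ₁b u) (hftc u)
      · exact abs_mul_sq_le_one (hftpos u) (hφcb u) (hftc u)
      · show ft u * ψ u = (1-θ)*(ft u * ψ₁ u) + θ
        have h := hftc u
        simp only [hψdef]
        ring_nf
        linear_combination θ * h
      · rw [show ft u * φc u - ft u * ψ₁ u = ft u * (φc u - ψ₁ u) by ring,
          abs_mul, abs_of_pos (hftpos u), abs_sub_comm (φc u) (ψ₁ u)]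
        exact mul_le_mul_of_nonneg_right (hMfge u) (abs_nonneg _)
    -- integrate the estimate
    have hint_abs2 : IntervalIntegrable (fun u => θ + k/2 + (Mf/k) * |ψ₁ u - φc u|)
        volume r t := intervalIntegrable_const.add (habs_int.const_mul (Mf/k))
    have hint_lhs : IntervalIntegrable (fun u => Real.sqrt (1 - (ft u)^2*(φc u)^2)
        - (θ + k/2 + (Mf/k)*|ψ₁ u - φc u|)) volume r t := (hsqint r t).sub hint_abs2
    have hmono2 : ∫ u in r..t, (Real.sqrt (1 - (ft u)^2*(φc u)^2)
          - (θ + k/2 + (Mf/k)*|ψ₁ u - φc u|))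
        ≤ ∫ u in r..t, Real.sqrt (1 - (ft u)^2*(ψ u)^2) := by
      refine intervalIntegral.integral_mono_on hrt.le hint_lhs ?_ hpoint
      have h := hcont_int1 1
      simp only [one_mul] at h
      exact h.intervalIntegrable r t
    have hsplit2 : ∫ u in r..t, (Real.sqrt (1 - (ft u)^2*(φc u)^2)
          - (θ + k/2 + (Mf/k)*|ψ₁ u - φc u|))
        = (∫ u in r..t, Real.sqrt (1 - (ft u)^2*(φc u)^2))
          - ((θ+k/2)*T + (Mf/k) * ∫ u in r..t, |ψ₁ u - φc u|) := by
      rw [intervalIntegral.integral_sub (hsqint r t) hint_abs2,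
        intervalIntegral.integral_add intervalIntegrable_const (habs_int.const_mul (Mf/k)),
        intervalIntegral.integral_const, intervalIntegral.integral_const_mul]
      simp only [smul_eq_mul, hTdef]
      ring
    have hMk : (0:ℝ) ≤ Mf/k := div_nonneg hMfpos.le hkpos.le
    have h7 : (Mf/k) * (∫ u in r..t, |ψ₁ u - φc u|) ≤ Mf/k*η :=
      mul_le_mul_of_nonneg_left hdist hMk
    have h8 : (θ+k/2)*T = θ*T + k/2*T := by ring
    have hsup : lorLength f r t id B ≤ timeSep I f (r, 0) (t, d₃) :=
      le_csSup (timeSep_bddAbove hIc hf hfpos (r,0) (t,d₃)) hmem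
    linarith [hLt, hstep1, hmono2, hsplit2, h7, hθT, hkT, hηk, hsup, h8]


lemma causal_mono {I : Set ℝ} {f : ℝ → ℝ} {a b : ℝ} {α β : ℝ → ℝ}
    (h : IsCausalCurve I f a b α β) : α a < α b := by
  obtain ⟨hab, hmem, hdiff, hcaus⟩ := h
  have contα : ContinuousOn α (Icc a b) :=
    fun s hs => ((hdiff s hs).1).continuousAt.continuousWithinAt
  have hmono := strictMonoOn_of_deriv_pos (convex_Icc a b) contα
    (fun x hx => (hcaus x (by rw [interior_Icc] at hx; exact Ioo_subset_Icc_self hx)).1)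
  exact hmono ⟨le_rfl, hab.le⟩ ⟨hab.le, le_rfl⟩ hab

lemma timeSep_empty {I : Set ℝ} {f : ℝ → ℝ} {p q : ℝ × ℝ} (h : q.1 ≤ p.1) :
    timeSep I f p q = 0 := by
  have he : {L | ∃ a b α β, IsCausalCurve I f a b α β ∧
      α a = p.1 ∧ β a = p.2 ∧ α b = q.1 ∧ β b = q.2 ∧ L = lorLength f a b α β} = ∅ := by
    ext L
    simp only [mem_setOf_eq, mem_empty_iff_false, iff_false]
    rintro ⟨a, b, α, β, hc, ha, _, hb, _, _⟩
    have := causal_mono hc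
    rw [ha, hb] at this
    exact absurd this (not_lt.2 h)
  rw [timeSep, he, insert_empty_eq, csSup_singleton]





/-- The reverse triangle inequality in the Lorentzian warped product `I ×_f Y`:
if `(r,x) ≤ (s,y) ≤ (t,z)` then `τ((r,x),(s,y)) + τ((s,y),(t,z)) ≤ τ((r,x),(t,z))`. -/
theorem wp_reverse_triangle
    (I : Set ℝ) (hIc : I.OrdConnected)
    (f : ℝ → ℝ) (hf : ContinuousOn f I) (hfpos : ∀ t ∈ I, 0 < f t)
    {Y : Type*} [MetricSpace Y] (r s t : ℝ) (x y z : Y)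
    (h₁ : wpCausal I f (r, x) (s, y)) (h₂ : wpCausal I f (s, y) (t, z)) :
    wpTau I f (r, x) (s, y) + wpTau I f (s, y) (t, z) ≤ wpTau I f (r, x) (t, z) := by
  rw [wpCausal, causalRel] at h₁ h₂
  rw [wpTau, wpTau, wpTau]
  simp only at h₁ h₂ ⊢
  rcases h₁ with heq | ⟨a₁, b₁, α₁, β₁, hc₁, e₁, e₁', e₁'', e₁'''⟩
  · -- r = s, x = y
    have hr : r = s := congrArg Prod.fst heq
    have hd : (0:ℝ) = dist x y := congrArg Prod.snd heq
    have hxy : x = y := dist_eq_zero.1 hd.symm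
    subst hr
    subst hxy
    have h0 : timeSep I f (r, 0) (r, dist x x) = 0 := timeSep_empty le_rfl
    rw [h0, zero_add]
  · rcases h₂ with heq | ⟨a₂, b₂, α₂, β₂, hc₂, e₂, e₂', e₂'', e₂'''⟩
    · have hs : s = t := congrArg Prod.fst heq
      have hd : (0:ℝ) = dist y z := congrArg Prod.snd heq
      have hyz : y = z := dist_eq_zero.1 hd.symm
      subst hs
      subst hyz
      have h0 : timeSep I f (s, 0) (s, dist y y) = 0 := timeSep_empty le_rfl
      rw [h0, add_zero]
    · -- main case
      set C := timeSep I f (r, 0) (t, dist x z) with hC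
      have key : ∀ L₁ ∈ (insert (0:ℝ) {L | ∃ a b α β, IsCausalCurve I f a b α β ∧
            α a = r ∧ β a = 0 ∧ α b = s ∧ β b = dist x y ∧ L = lorLength f a b α β}),
          ∀ L₂ ∈ (insert (0:ℝ) {L | ∃ a b α β, IsCausalCurve I f a b α β ∧
            α a = s ∧ β a = 0 ∧ α b = t ∧ β b = dist y z ∧ L = lorLength f a b α β}),
          L₁ + L₂ ≤ C := by
        intro L₁ hL₁ L₂ hL₂
        obtain ⟨A₁, B₁, g₁, m₁, hk₁, f₁a, f₁b, f₁c, f₁d, hlen₁⟩ :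
            ∃ a b α β, IsCausalCurve I f a b α β ∧ α a = r ∧ β a = 0 ∧ α b = s ∧
              β b = dist x y ∧ L₁ ≤ lorLength f a b α β := by
          rcases hL₁ with rfl | ⟨a, b, α, β, hc, h1, h2, h3, h4, rfl⟩
          · exact ⟨a₁, b₁, α₁, β₁, hc₁, e₁, e₁', e₁'', e₁''',
              lorLength_nonneg hc₁.1.le _ _⟩
          · exact ⟨a, b, α, β, hc, h1, h2, h3, h4, le_rfl⟩
        obtain ⟨A₂, B₂, g₂, m₂, hk₂, f₂a, f₂b, f₂c, f₂d, hlen₂⟩ :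
            ∃ a b α β, IsCausalCurve I f a b α β ∧ α a = s ∧ β a = 0 ∧ α b = t ∧
              β b = dist y z ∧ L₂ ≤ lorLength f a b α β := by
          rcases hL₂ with rfl | ⟨a, b, α, β, hc, h1, h2, h3, h4, rfl⟩
          · exact ⟨a₂, b₂, α₂, β₂, hc₂, e₂, e₂', e₂'', e₂''',
              lorLength_nonneg hc₂.1.le _ _⟩
          · exact ⟨a, b, α, β, hc, h1, h2, h3, h4, le_rfl⟩
        calc L₁ + L₂ ≤ lorLength f A₁ B₁ g₁ m₁ + lorLength f A₂ B₂ g₂ m₂ :=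
              add_le_add hlen₁ hlen₂
          _ ≤ timeSep I f (r, 0) (t, dist x z) :=
              key_step hIc hf hfpos dist_nonneg (dist_triangle x y z)
                hk₁ f₁a f₁b f₁c f₁d hk₂ f₂a f₂b f₂c f₂d
          _ = C := hC.symm
      rw [timeSep, timeSep]
      rw [← le_sub_iff_add_le]
      apply csSup_le (insert_nonempty _ _)
      intro L₁ hL₁
      rw [le_sub_iff_add_le, add_comm, ← le_sub_iff_add_le]
      apply csSup_le (insert_nonempty _ _)
      intro L₂ hL₂
      rw [le_sub_iff_add_le, add_comm]
      exact key L₁ hL₁ L₂ hL₂
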